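/- Let p_1,…,p_d be natural numbers, each not divisible by 2, not divisible by 3 and not equal to 1, and pairwise coprime (gcd(p_i,p_j) = 1 for i ≠ j). Then for any choice of integers n_i with 1 ≤ n_i ≤ p_i − 1 for each i, one has Σ_{i=1}^d cos(π n_i / p_i) ≠ 0. -/

import Mathlib

open Real Finset IntermediateField

lemma cos_helper (M k c : ℕ) (hM : M ≠ 0) (hc : c ≤ M) :
    Complex.exp (2 * π * Complex.I / M) ^ (k * c) +
      Complex.exp (2 * π * Complex.I / M) ^ (k * (M - c)) =
      ((2 * Real.cos (2 * π * k * c / M) : ℝ) : ℂ) := by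
  have hM' : (M : ℂ) ≠ 0 := Nat.cast_ne_zero.mpr hM
  set θ : ℝ := 2 * π * k * c / M with hθ
  have h1 : ((k * c : ℕ) : ℂ) * (2 * π * Complex.I / M) = (θ : ℂ) * Complex.I := by
    rw [hθ]; push_cast; field_simp
  have h2 : ((k * (M - c) : ℕ) : ℂ) * (2 * π * Complex.I / M)
      = -(θ : ℂ) * Complex.I + (k : ℂ) * (2 * π * Complex.I) := by
    rw [hθ]; push_cast [Nat.cast_sub hc]; field_simp; ring
  rw [← Complex.exp_nat_mul, ← Complex.exp_nat_mul, h1, h2, Complex.exp_add,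
    Complex.exp_nat_mul, Complex.exp_two_pi_mul_I, one_pow, mul_one,
    ← Complex.two_cos]
  push_cast [Complex.ofReal_cos]
  ring

lemma crt_k (d : ℕ) (q : Fin d → ℕ) (hq5 : ∀ i, 5 ≤ q i) (hq2 : ∀ i, ¬ 2 ∣ q i)
    (hqcop : ∀ i j, i ≠ j → Nat.Coprime (q i) (q j)) (t : ∀ i, ZMod (q i))
    (htu : ∀ i, IsUnit (t i)) :
    ∃ k : ℕ, k % 2 = 1 ∧ (∀ i, ((k : ℕ) : ZMod (q i)) = t i) ∧
      Nat.Coprime k (2 * ∏ i, q i) := by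
  have hQpos : 0 < ∏ i, q i := Finset.prod_pos fun i _ => by have := hq5 i; omega
  haveI : NeZero (∏ i, q i) := ⟨hQpos.ne'⟩
  haveI : ∀ i, NeZero (q i) := fun i => ⟨by have := hq5 i; omega⟩
  set e := ZMod.prodEquivPi q (fun i j h => hqcop i j h) with he
  set k₀ := (e.symm t).val with hk₀def
  have hk₀ : ∀ i, ((k₀ : ℕ) : ZMod (q i)) = t i := by
    intro i
    have h1 : ((k₀ : ℕ) : ZMod (∏ i, q i)) = e.symm t := by
      rw [hk₀def, ZMod.natCast_val, ZMod.cast_id]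
    have h2 : e ((k₀ : ℕ) : ZMod (∏ i, q i)) = t := by
      rw [h1]; exact e.apply_symm_apply t
    have h3 := congrFun h2 i
    rwa [map_natCast, Pi.natCast_apply] at h3
  have hQodd : Odd (∏ i, q i) := by
    refine Finset.prod_induction q Odd (fun a b => Odd.mul) odd_one fun i _ => ?_
    rw [Nat.odd_iff]; have := hq2 i; omega
  rw [Nat.odd_iff] at hQodd
  set k := if Even k₀ then k₀ + ∏ i, q i else k₀ with hk
  have hk2 : k % 2 = 1 := by
    rcases Nat.even_or_odd k₀ with hE | hE
    · rw [hk, if_pos hE]; rw [Nat.even_iff] at hE; omega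
    · rw [hk, if_neg (Nat.not_even_iff_odd.mpr hE)]; rwa [Nat.odd_iff] at hE
  have hkt : ∀ i, ((k : ℕ) : ZMod (q i)) = t i := by
    intro i
    by_cases hE : Even k₀
    · rw [hk, if_pos hE]
      rw [Nat.cast_add]
      rw [(ZMod.natCast_eq_zero_iff (∏ i, q i) (q i)).mpr
        (Finset.dvd_prod_of_mem q (mem_univ i)), add_zero]
      exact hk₀ i
    · rw [hk, if_neg hE]; exact hk₀ i
  refine ⟨k, hk2, hkt, Nat.Coprime.mul_right ?_ (Nat.Coprime.prod_right fun i _ => ?_)⟩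
  · exact ((Nat.prime_two.coprime_iff_not_dvd).mpr (by omega)).symm
  · have : IsUnit ((k : ℕ) : ZMod (q i)) := by rw [hkt i]; exact htu i
    exact (ZMod.isUnit_iff_coprime k (q i)).mp this

lemma r_eq (q k m : ℕ) (hq5 : 5 ≤ q) (hq2 : q % 2 = 1) (hk2 : k % 2 = 1)
    (hkm : ((k * m : ℕ) : ZMod q) = if Even m then (2 : ZMod q) else -1) :
    (k * m) % (2 * q) = if Even m then 2 else 2 * q - 1 := by
  set r := (k * m) % (2 * q) with hrdef
  have hqpos : 0 < q := by omega
  have hrlt : r < 2 * q := Nat.mod_lt _ (by omega)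
  have hr2 : r % 2 = m % 2 := by
    rw [hrdef, Nat.mod_mod_of_dvd _ ⟨q, rfl⟩, Nat.mul_mod, hk2, one_mul, Nat.mod_mod]
  have hrq : (r : ZMod q) = ((k * m : ℕ) : ZMod q) := by
    rw [ZMod.natCast_eq_natCast_iff]
    exact (Nat.mod_mod_of_dvd _ ⟨2, by ring⟩ : r % q = (k * m) % q)
  have hdm : q * (r / q) + r % q = r := Nat.div_add_mod r q
  have hsl : r / q < 2 := (Nat.div_lt_iff_lt_mul hqpos).mpr (by omega)
  haveI : NeZero q := ⟨by omega⟩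
  by_cases hE : Even m
  · rw [if_pos hE]
    rw [if_pos hE] at hkm
    have hrqv : r % q = 2 := by
      have h2 : (r : ZMod q) = ((2 : ℕ) : ZMod q) := by rw [hrq, hkm]; norm_num
      have h3 := (ZMod.natCast_eq_natCast_iff _ _ _).mp h2
      unfold Nat.ModEq at h3
      rwa [Nat.mod_eq_of_lt (by omega : 2 < q)] at h3
    rw [Nat.even_iff] at hE
    interval_cases h : r / q <;> omega
  · rw [if_neg hE]
    rw [if_neg hE] at hkm
    have hrqv : r % q = q - 1 := by
      have h1 : ((q - 1 : ℕ) : ZMod q) = -1 := by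
        push_cast [Nat.cast_sub (by omega : 1 ≤ q)]
        rw [ZMod.natCast_self]; ring
      have h2 : (r : ZMod q) = ((q - 1 : ℕ) : ZMod q) := by rw [hrq, hkm, h1]
      have h3 := (ZMod.natCast_eq_natCast_iff _ _ _).mp h2
      unfold Nat.ModEq at h3
      rwa [Nat.mod_eq_of_lt (by omega : q - 1 < q)] at h3
    rw [Nat.not_even_iff] at hE
    interval_cases h : r / q <;> omega

lemma key (d : ℕ) (hd : 1 ≤ d) (q : Fin d → ℕ) (hq5 : ∀ i, 5 ≤ q i)
    (hq2 : ∀ i, ¬ 2 ∣ q i)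
    (hqcop : ∀ i j, i ≠ j → Nat.Coprime (q i) (q j))
    (m : Fin d → ℕ) (hm1 : ∀ i, 1 ≤ m i) (hmq : ∀ i, m i < q i)
    (hmcop : ∀ i, Nat.Coprime (m i) (q i)) :
    (∑ i, Real.cos (π * m i / q i)) ≠ 0 := by
  intro h0
  haveI : ∀ i, NeZero (q i) := fun i => ⟨by have := hq5 i; omega⟩
  set Q := ∏ i, q i with hQdef
  have hQpos : 0 < Q := Finset.prod_pos fun i _ => by have := hq5 i; omega
  have hqQ : ∀ i, q i ∣ Q := fun i => Finset.dvd_prod_of_mem q (mem_univ i)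
  set M := 2 * Q with hMdef
  have hMpos : 0 < M := by omega
  have hM0 : (M : ℕ) ≠ 0 := hMpos.ne'
  -- residues
  set t : ∀ i, ZMod (q i) := fun i =>
    (if Even (m i) then (2 : ZMod (q i)) else -1) * ((m i : ZMod (q i)))⁻¹ with htdef
  have hinv : ∀ i, ((m i : ZMod (q i)))⁻¹ * (m i : ZMod (q i)) = 1 := fun i => by
    rw [mul_comm]; exact ZMod.coe_mul_inv_eq_one _ (hmcop i)
  have htu : ∀ i, IsUnit (t i) := by
    intro i
    refine IsUnit.mul ?_ (IsUnit.of_mul_eq_one _ (hinv i))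
    by_cases hE : Even (m i)
    · rw [if_pos hE]
      have h2 : ((2 : ℕ) : ZMod (q i)) = 2 := by push_cast; rfl
      rw [← h2]
      exact (ZMod.isUnit_iff_coprime 2 (q i)).mpr
        ((Nat.prime_two.coprime_iff_not_dvd).mpr (hq2 i))
    · rw [if_neg hE]; exact isUnit_one.neg
  obtain ⟨k, hk2, hkt, hkcop⟩ := crt_k d q hq5 hq2 hqcop t htu
  -- the primitive root and the field
  set ζ : ℂ := Complex.exp (2 * π * Complex.I / M) with hζdef
  have hζ : IsPrimitiveRoot ζ M := Complex.isPrimitiveRoot_exp M hM0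
  have hint : IsIntegral ℚ ζ := (hζ.isIntegral hMpos).tower_top
  have hζk : IsPrimitiveRoot (ζ ^ k) M := hζ.pow_of_coprime k hkcop
  have hroot : (ζ ^ k) ∈ (minpoly ℚ ζ).aroots ℂ := by
    rw [← Polynomial.cyclotomic_eq_minpoly_rat hζ hMpos, Polynomial.mem_aroots]
    exact ⟨Polynomial.cyclotomic_ne_zero M ℚ, by
      rw [Polynomial.aeval_def, Polynomial.eval₂_eq_eval_map, Polynomial.map_cyclotomic]
      exact hζk.isRoot_cyclotomic hMpos⟩
  obtain ⟨σ, hσgen⟩ : ∃ σ : ℚ⟮ζ⟯ →ₐ[ℚ] ℂ,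
      σ (IntermediateField.AdjoinSimple.gen ℚ ζ) = ζ ^ k :=
    ⟨(IntermediateField.algHomAdjoinIntegralEquiv ℚ hint).symm ⟨ζ ^ k, hroot⟩,
      IntermediateField.algHomAdjoinIntegralEquiv_symm_apply_gen ℚ hint _⟩
  set gen := IntermediateField.AdjoinSimple.gen ℚ ζ with hgen
  have hgenmap : algebraMap ℚ⟮ζ⟯ ℂ gen = ζ := IntermediateField.AdjoinSimple.algebraMap_gen ℚ ζ
  -- exponents
  set c : Fin d → ℕ := fun i => m i * (Q / q i) with hcdef
  have hqe : ∀ i, q i * (Q / q i) = Q := fun i => Nat.mul_div_cancel' (hqQ i)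
  have hepos : ∀ i, 0 < Q / q i := fun i =>
    Nat.div_pos (Nat.le_of_dvd hQpos (hqQ i)) (by have := hq5 i; omega)
  have hcM : ∀ i, c i ≤ M := by
    intro i
    have h1 : c i < Q := by
      calc c i < q i * (Q / q i) := (Nat.mul_lt_mul_right (hepos i)).mpr (hmq i)
        _ = Q := hqe i
    omega
  -- real argument identity
  have hargm : ∀ (j : ℕ) (i : Fin d),
      (2 * π * j * (c i) / M : ℝ) = π * ((j * m i : ℕ) : ℝ) / q i := by
    intro j i
    have h1 : ((q i : ℝ)) ≠ 0 := by
      have := hq5 i; exact Nat.cast_ne_zero.mpr (by omega)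
    have h2 : ((Q / q i : ℕ) : ℝ) ≠ 0 := Nat.cast_ne_zero.mpr (hepos i).ne'
    have h3 : ((Q : ℕ) : ℝ) = (q i : ℝ) * ((Q / q i : ℕ) : ℝ) := by
      exact_mod_cast (hqe i).symm
    rw [hcdef, hMdef]
    push_cast [h3]
    field_simp
  -- the elements
  set x : Fin d → (ℚ⟮ζ⟯ : IntermediateField ℚ ℂ) :=
    fun i => gen ^ (c i) + gen ^ (M - c i) with hxdef
  have hxmap : ∀ i, algebraMap ℚ⟮ζ⟯ ℂ (x i)
      = ((2 * Real.cos (π * m i / q i) : ℝ) : ℂ) := by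
    intro i
    rw [hxdef]
    simp only [map_add, map_pow, hgenmap]
    have hh := cos_helper M 1 (c i) hM0 (hcM i)
    simp only [one_mul] at hh
    rw [hζdef, hh, hargm 1 i]
    norm_num
  -- the sum vanishes in the field
  have hS0 : (∑ i, x i) = 0 := by
    apply (algebraMap ℚ⟮ζ⟯ ℂ).injective
    rw [map_sum, map_zero, Finset.sum_congr rfl fun i _ => hxmap i,
      ← Complex.ofReal_sum, ← Finset.mul_sum, h0]
    norm_num
  have hσS : σ (∑ i, x i) = 0 := by rw [hS0, map_zero]
  -- compute the conjugate sum
  set r : Fin d → ℕ := fun i => (k * m i) % (2 * q i) with hrdef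
  have hkmq : ∀ i, ((k * m i : ℕ) : ZMod (q i))
      = if Even (m i) then (2 : ZMod (q i)) else -1 := by
    intro i
    push_cast
    rw [hkt i, htdef]
    simp only
    rw [mul_assoc, hinv i, mul_one]
  have hr : ∀ i, r i = if Even (m i) then 2 else 2 * q i - 1 := fun i =>
    r_eq (q i) k (m i) (hq5 i) (by have := hq2 i; omega) hk2 (hkmq i)
  have hcos : ∀ i, σ (x i) = ((2 * Real.cos (π * (r i) / q i) : ℝ) : ℂ) := by
    intro i
    rw [hxdef]
    simp only [map_add, map_pow, hσgen]
    rw [← pow_mul, ← pow_mul, hζdef, cos_helper M k (c i) hM0 (hcM i), hargm k i]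
    have hq0 : ((q i : ℝ)) ≠ 0 := Nat.cast_ne_zero.mpr (by have := hq5 i; omega)
    set T := (k * m i) / (2 * q i) with hT
    have hdm : 2 * q i * T + r i = k * m i := Nat.div_add_mod _ _
    have hcast : ((k * m i : ℕ) : ℝ) = 2 * (q i : ℝ) * T + r i := by
      exact_mod_cast hdm.symm
    have harg : (π * ((k * m i : ℕ) : ℝ) / q i)
        = π * (r i) / q i + (T : ℝ) * (2 * π) := by
      rw [hcast]; field_simp; ring
    rw [harg, Real.cos_add_nat_mul_two_pi]
  -- positivity
  have hpos : ∀ i, 0 < Real.cos (π * (r i) / q i) := by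
    intro i
    have hq0 : (0:ℝ) < q i := by have := hq5 i; positivity
    have hq5' : (5:ℝ) ≤ q i := by exact_mod_cast hq5 i
    rw [hr i]
    by_cases hE : Even (m i)
    · rw [if_pos hE]
      apply Real.cos_pos_of_mem_Ioo
      constructor
      · have h1 : (0:ℝ) ≤ π * ((2:ℕ):ℝ) / q i := by positivity
        have := Real.pi_div_two_pos; linarith
      · push_cast
        rw [div_lt_div_iff₀ hq0 (by norm_num : (0:ℝ) < 2)]
        nlinarith [Real.pi_pos]
    · rw [if_neg hE]
      have h1 : (π * ((2 * q i - 1 : ℕ) : ℝ) / q i) = 2 * π - π / q i := by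
        push_cast [Nat.cast_sub (by have := hq5 i; omega : 1 ≤ 2 * q i)]
        field_simp
      rw [h1, Real.cos_two_pi_sub]
      apply Real.cos_pos_of_mem_Ioo
      constructor
      · have h2 : (0:ℝ) ≤ π / q i := by positivity
        have := Real.pi_div_two_pos; linarith
      · rw [div_lt_div_iff₀ hq0 (by norm_num : (0:ℝ) < 2)]
        nlinarith [Real.pi_pos]
  -- contradiction
  have hfin : σ (∑ i, x i) = ((∑ i, 2 * Real.cos (π * (r i) / q i) : ℝ) : ℂ) := by
    rw [map_sum, Finset.sum_congr rfl fun i _ => hcos i, ← Complex.ofReal_sum]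
  have hsum : (0:ℝ) < ∑ i, 2 * Real.cos (π * (r i) / q i) :=
    Finset.sum_pos (fun i _ => by have := hpos i; linarith) ⟨⟨0, hd⟩, mem_univ _⟩
  rw [hσS] at hfin
  exact (Complex.ofReal_ne_zero.mpr hsum.ne') hfin.symm

/-- Lemma 5 of the paper: `Σ_i cos(π n_i / p_i) ≠ 0` for pairwise coprime `p_i`
not divisible by 2 or 3 and not equal to 1. -/
theorem stmt_1 (d : ℕ) (hd : 1 ≤ d) (p : Fin d → ℕ)
    (hp2 : ∀ i, ¬ (2 ∣ p i)) (hp3 : ∀ i, ¬ (3 ∣ p i)) (hp1 : ∀ i, p i ≠ 1)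
    (hcop : ∀ i j, i ≠ j → Nat.Coprime (p i) (p j))
    (n : Fin d → ℕ) (hn : ∀ i, 1 ≤ n i ∧ n i ≤ p i - 1) :
    (∑ i, Real.cos (π * n i / p i)) ≠ 0 := by
  set g : Fin d → ℕ := fun i => Nat.gcd (n i) (p i) with hgdef
  set q : Fin d → ℕ := fun i => p i / g i with hqdef
  set m : Fin d → ℕ := fun i => n i / g i with hmdef
  have hp0 : ∀ i, p i ≠ 0 := fun i h => hp2 i (h ▸ dvd_zero 2)
  have hn1 : ∀ i, 1 ≤ n i := fun i => (hn i).1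
  have hnp : ∀ i, n i < p i := fun i => by
    have h1 := (hn i).2; have h2 := hp0 i; omega
  have hgpos : ∀ i, 0 < g i := fun i =>
    Nat.gcd_pos_of_pos_left _ (by have := hn1 i; omega)
  have hgn : ∀ i, g i ∣ n i := fun i => Nat.gcd_dvd_left _ _
  have hgp : ∀ i, g i ∣ p i := fun i => Nat.gcd_dvd_right _ _
  have hqdvd : ∀ i, q i ∣ p i := fun i => Nat.div_dvd_of_dvd (hgp i)
  have hq2 : ∀ i, ¬ 2 ∣ q i := fun i h => hp2 i (h.trans (hqdvd i))
  have hq3 : ∀ i, ¬ 3 ∣ q i := fun i h => hp3 i (h.trans (hqdvd i))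
  have hm1 : ∀ i, 1 ≤ m i := fun i =>
    Nat.div_pos (Nat.le_of_dvd (by have := hn1 i; omega) (hgn i)) (hgpos i)
  have hmq : ∀ i, m i < q i := fun i =>
    Nat.div_lt_div_of_lt_of_dvd (hgp i) (hnp i)
  have hq5 : ∀ i, 5 ≤ q i := fun i => by
    have h2 := hq2 i; have h3 := hq3 i; have h4 := hm1 i; have h5 := hmq i
    rw [Nat.dvd_iff_mod_eq_zero] at h2 h3
    omega
  have hmcop : ∀ i, Nat.Coprime (m i) (q i) := fun i =>
    Nat.coprime_div_gcd_div_gcd (hgpos i)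
  have hqcop : ∀ i j, i ≠ j → Nat.Coprime (q i) (q j) := fun i j h =>
    ((hcop i j h).coprime_dvd_left (hqdvd i)).coprime_dvd_right (hqdvd j)
  have heq : ∀ i, (π * n i / p i : ℝ) = π * m i / q i := by
    intro i
    have h1 : (n i : ℝ) = (g i : ℝ) * m i := by
      exact_mod_cast (Nat.mul_div_cancel' (hgn i)).symm
    have h2 : (p i : ℝ) = (g i : ℝ) * q i := by
      exact_mod_cast (Nat.mul_div_cancel' (hgp i)).symm
    have hg0 : (g i : ℝ) ≠ 0 := Nat.cast_ne_zero.mpr (hgpos i).ne'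
    have hq0 : (q i : ℝ) ≠ 0 := Nat.cast_ne_zero.mpr (by have := hq5 i; omega)
    rw [h1, h2]
    field_simp
  have hs : (∑ i, Real.cos (π * n i / p i)) = ∑ i, Real.cos (π * m i / q i) :=
    Finset.sum_congr rfl fun i _ => by rw [heq i]
  rw [hs]
  exact key d hd q hq5 hq2 hqcop m hm1 hmq hmcop
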